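/- (Gradient asymptotics of the truncated bubble) With $U_n$ as the truncated Aubin–Talenti bubble ($\Theta_n(r) = A_N(n/(1+n^2r^2))^{(N-2)/2}$ on $[0,1)$, affine cutoff on $[1,2)$, zero beyond), one has $\|\nabla U_n\|_{L^2(\mathbb{R}^N)}^2 = \mathcal{S}^{N/2} + O(n^{-(N-2)})$ and $\|U_n\|_{L^{2^*}(\mathbb{R}^N)}^{2^*} = \mathcal{S}^{N/2} + O(n^{-N})$ as $n \to \infty$, where $\mathcal{S}$ is the best Sobolev constant and the identities $\omega_N A_N^2 (N-2)^2 \int_0^\infty \frac{s^{N+1}}{(1+s^2)^N}ds = \mathcal{S}^{N/2} = \omega_N A_N^{2^*}\int_0^\infty \frac{s^{N-1}}{(1+s^2)^N}ds$ hold. -/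

import Mathlib

set_option maxHeartbeats 1000000

open MeasureTheory Filter Asymptotics

open Set

/-- `A_N = [N(N-2)]^{(N-2)/4}`. -/
noncomputable def AN (N : ℕ) : ℝ := ((N : ℝ) * ((N : ℝ) - 2)) ^ (((N : ℝ) - 2) / 4)

/-- Radial profile of the truncated Aubin–Talenti bubble `U_n`. -/
noncomputable def Θ (N : ℕ) (n : ℕ) (r : ℝ) : ℝ :=
  if r < 1 then AN N * ((n : ℝ) / (1 + (n : ℝ) ^ 2 * r ^ 2)) ^ (((N : ℝ) - 2) / 2)
  else if r < 2 then AN N * ((n : ℝ) / (1 + (n : ℝ) ^ 2)) ^ (((N : ℝ) - 2) / 2) * (2 - r)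
  else 0

/-- Model integrand `r^k / (1 + b^2 r^2)^N`. -/
noncomputable def gm (b : ℝ) (k N : ℕ) : ℝ → ℝ := fun r => r ^ k / (1 + b ^ 2 * r ^ 2) ^ N

lemma gm_denom_pos (b r : ℝ) : (0:ℝ) < 1 + b ^ 2 * r ^ 2 := by positivity

lemma gm_cont (b : ℝ) (k N : ℕ) : Continuous (gm b k N) := by
  apply Continuous.div (continuous_pow k) (by continuity)
  intro r
  exact pow_ne_zero _ (gm_denom_pos b r).ne'

lemma gm_nonneg (b : ℝ) (k N : ℕ) (r : ℝ) (hr : 0 ≤ r) : 0 ≤ gm b k N r := by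
  unfold gm; positivity

lemma gm_intOn_Ioi_one {b : ℝ} (hb : 1 ≤ b) {k N : ℕ} (hk : (k:ℝ) - 2*N < -1) :
    IntegrableOn (gm b k N) (Ioi 1) := by
  apply Integrable.mono' (g := fun r : ℝ => r ^ ((k:ℝ) - 2*N))
    (integrableOn_Ioi_rpow_of_lt hk one_pos)
    ((gm_cont b k N).aestronglyMeasurable)
  filter_upwards [ae_restrict_mem measurableSet_Ioi] with r hr
  have hr1 : (1:ℝ) < r := hr
  have hr0 : (0:ℝ) < r := lt_trans one_pos hr1
  rw [Real.norm_eq_abs, abs_of_nonneg (gm_nonneg b k N r hr0.le)]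
  have hb2 : (1:ℝ) ≤ b ^ 2 := one_le_pow₀ hb
  have h1 : r ^ 2 ≤ 1 + b ^ 2 * r ^ 2 := by nlinarith [mul_le_mul_of_nonneg_right hb2 (sq_nonneg r)]
  have h2 : (r ^ 2) ^ N ≤ (1 + b ^ 2 * r ^ 2) ^ N :=
    pow_le_pow_left₀ (by positivity) h1 N
  have h3 : gm b k N r ≤ r ^ k / (r ^ 2) ^ N := by
    apply div_le_div_of_nonneg_left (by positivity) (by positivity) h2
  refine h3.trans_eq ?_
  rw [← pow_mul, ← Real.rpow_natCast r k, ← Real.rpow_natCast r (2*N),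
    ← Real.rpow_sub hr0]
  push_cast
  ring_nf

lemma gm_intOn_Ioi_zero {b : ℝ} (hb : 1 ≤ b) {k N : ℕ} (hk : (k:ℝ) - 2*N < -1) :
    IntegrableOn (gm b k N) (Ioi 0) := by
  rw [← Ioc_union_Ioi_eq_Ioi (zero_le_one' ℝ)]
  exact ((gm_cont b k N).integrableOn_Ioc).union (gm_intOn_Ioi_one hb hk)

lemma gm_subst {b : ℝ} (hb : 0 < b) (k N : ℕ) :
    ∫ r in Ioi (0:ℝ), gm b k N r = (b ^ (k+1))⁻¹ * ∫ s in Ioi (0:ℝ), gm 1 k N s := by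
  have h := integral_comp_mul_left_Ioi (gm 1 k N) 0 hb
  rw [mul_zero] at h
  have h2 : ∀ x : ℝ, gm 1 k N (b * x) = b ^ k * gm b k N x := by
    intro x
    unfold gm
    rw [one_pow, one_mul, mul_pow, mul_pow, mul_div_assoc]
  simp only [h2, smul_eq_mul] at h
  rw [MeasureTheory.integral_const_mul] at h
  have hbk : (b:ℝ) ^ k ≠ 0 := pow_ne_zero _ hb.ne'
  field_simp at h ⊢
  rw [pow_succ]
  nlinarith [h]

lemma gm_tail_nonneg (b : ℝ) (k N : ℕ) :
    0 ≤ ∫ r in Ioi (1:ℝ), gm b k N r := by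
  apply setIntegral_nonneg measurableSet_Ioi
  intro r hr
  exact gm_nonneg b k N r (le_of_lt (lt_trans one_pos hr))

lemma gm_tail_le {b : ℝ} (hb : 1 ≤ b) {k N : ℕ} (hk : (k:ℝ) - 2*N < -1) :
    ∫ r in Ioi (1:ℝ), gm b k N r
      ≤ (b ^ (2*N))⁻¹ * ∫ r in Ioi (1:ℝ), r ^ ((k:ℝ) - 2*N) := by
  rw [← MeasureTheory.integral_const_mul]
  apply setIntegral_mono_on (gm_intOn_Ioi_one hb hk)
    ((integrableOn_Ioi_rpow_of_lt hk one_pos).const_mul _) measurableSet_Ioi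
  intro r hr
  have hr1 : (1:ℝ) < r := hr
  have hr0 : (0:ℝ) < r := lt_trans one_pos hr1
  have hb0 : (0:ℝ) < b := lt_of_lt_of_le one_pos hb
  have h1 : b ^ 2 * r ^ 2 ≤ 1 + b ^ 2 * r ^ 2 := by nlinarith
  have h2 : (b ^ 2 * r ^ 2) ^ N ≤ (1 + b ^ 2 * r ^ 2) ^ N :=
    pow_le_pow_left₀ (by positivity) h1 N
  have h3 : gm b k N r ≤ r ^ k / (b ^ 2 * r ^ 2) ^ N :=
    div_le_div_of_nonneg_left (by positivity) (by positivity) h2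
  refine h3.trans_eq ?_
  rw [mul_pow, ← pow_mul, ← pow_mul, Real.rpow_sub hr0,
    show ((2:ℝ)*(N:ℝ)) = ((2*N : ℕ):ℝ) by push_cast; ring,
    Real.rpow_natCast, Real.rpow_natCast]
  field_simp

lemma gm_rpow_tail_nonneg (k N : ℕ) : 0 ≤ ∫ r in Ioi (1:ℝ), r ^ ((k:ℝ) - 2*N) := by
  apply setIntegral_nonneg measurableSet_Ioi
  intro r hr
  exact Real.rpow_nonneg (le_of_lt (lt_trans one_pos hr)) _

lemma gm_split {b : ℝ} (hb : 1 ≤ b) {k N : ℕ} (hk : (k:ℝ) - 2*N < -1) :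
    ∫ r in Ioo (0:ℝ) 1, gm b k N r
      = (b ^ (k+1))⁻¹ * (∫ s in Ioi (0:ℝ), gm 1 k N s) - ∫ r in Ioi (1:ℝ), gm b k N r := by
  have hsplit : ∫ r in Ioi (0:ℝ), gm b k N r
      = (∫ r in Ioc (0:ℝ) 1, gm b k N r) + ∫ r in Ioi (1:ℝ), gm b k N r := by
    rw [← setIntegral_union (Set.Ioc_disjoint_Ioi le_rfl) measurableSet_Ioi
      ((gm_cont b k N).integrableOn_Ioc) (gm_intOn_Ioi_one hb hk),
      Ioc_union_Ioi_eq_Ioi (zero_le_one' ℝ)]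
  rw [← MeasureTheory.integral_Ioc_eq_integral_Ioo, eq_sub_iff_add_eq, ← hsplit,
    gm_subst (lt_of_lt_of_le one_pos hb) k N]

lemma AN_pos {N : ℕ} (hN : 3 ≤ N) : 0 < AN N := by
  have h3 : (3:ℝ) ≤ (N:ℝ) := by exact_mod_cast hN
  apply Real.rpow_pos_of_pos
  nlinarith

-- derivative of Θ on (0,1)
lemma deriv_theta_inner {N n : ℕ} (hN : 3 ≤ N) (hn : 1 ≤ n) {r : ℝ} (hr : r ∈ Ioo (0:ℝ) 1) :
    deriv (Θ N n) r = AN N * (n:ℝ) ^ (((N:ℝ)-2)/2) *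
      ((n:ℝ)^2 * (2*r) * (-(((N:ℝ)-2)/2)) *
        (1 + (n:ℝ)^2*r^2) ^ ((-(((N:ℝ)-2)/2)) - 1)) := by
  set c : ℝ := ((N:ℝ)-2)/2 with hc
  have hn0 : (0:ℝ) < (n:ℝ) := by exact_mod_cast hn
  have hden : ∀ x : ℝ, (0:ℝ) < 1 + (n:ℝ)^2 * x^2 := fun x => by positivity
  have hev : Θ N n =ᶠ[nhds r] fun x => AN N * ((n:ℝ) ^ c * (1 + (n:ℝ)^2*x^2) ^ (-c)) := by
    have hopen : IsOpen {x : ℝ | x < 1} := isOpen_lt continuous_id continuous_const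
    filter_upwards [hopen.mem_nhds (show r ∈ {x : ℝ | x < 1} from hr.2)] with x hx
    rw [Θ, if_pos hx, Real.div_rpow hn0.le (hden x).le, Real.rpow_neg (hden x).le,
      div_eq_mul_inv]
  have hd : HasDerivAt (fun x : ℝ => AN N * ((n:ℝ) ^ c * (1 + (n:ℝ)^2*x^2) ^ (-c)))
      (AN N * (n:ℝ) ^ c * ((n:ℝ)^2 * (2*r) * (-c) * (1 + (n:ℝ)^2*r^2) ^ (-c - 1))) r := by
    have h1 : HasDerivAt (fun x : ℝ => 1 + (n:ℝ)^2 * x^2) ((n:ℝ)^2 * (2*r)) r := by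
      have := ((hasDerivAt_pow 2 r).const_mul ((n:ℝ)^2)).const_add 1
      simpa using this
    have h2 := h1.rpow_const (p := -c) (Or.inl (hden r).ne')
    have h3 := (h2.const_mul ((n:ℝ) ^ c)).const_mul (AN N)
    refine h3.congr_deriv ?_
    ring
  rw [hev.deriv_eq, hd.deriv]

lemma key1 {N n : ℕ} (hN : 3 ≤ N) (hn : 1 ≤ n) {r : ℝ} (hr : r ∈ Ioo (0:ℝ) 1) :
    r ^ (N-1) * (deriv (Θ N n) r) ^ 2
      = AN N ^ 2 * ((N:ℝ)-2)^2 * (n:ℝ) ^ (N+2) * gm (n:ℝ) (N+1) N r := by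
  rw [deriv_theta_inner hN hn hr]
  set c : ℝ := ((N:ℝ)-2)/2 with hc
  have hn0 : (0:ℝ) < (n:ℝ) := by exact_mod_cast hn
  have hden : (0:ℝ) < 1 + (n:ℝ)^2 * r^2 := by positivity
  have hNc : ((N - 2 : ℕ) : ℝ) = (N:ℝ) - 2 := by
    have : (2:ℕ) ≤ N := by omega
    push_cast [this]; ring
  have e1 : ((n:ℝ) ^ c) ^ 2 = (n:ℝ) ^ (N - 2) := by
    rw [← Real.rpow_natCast ((n:ℝ) ^ c) 2, ← Real.rpow_mul hn0.le, ← Real.rpow_natCast (n:ℝ) (N-2), hNc]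
    norm_num [hc]
  have e2 : ((1 + (n:ℝ)^2*r^2) ^ (-c - 1)) ^ 2 = ((1 + (n:ℝ)^2*r^2) ^ N)⁻¹ := by
    rw [← Real.rpow_natCast ((1 + (n:ℝ)^2*r^2) ^ (-c-1)) 2, ← Real.rpow_mul hden.le,
      ← Real.rpow_natCast (1 + (n:ℝ)^2*r^2) N, ← Real.rpow_neg hden.le]
    congr 1
    rw [hc]; push_cast; ring
  have e3 : (n:ℝ) ^ (N - 2) * ((n:ℝ)^2)^2 = (n:ℝ) ^ (N + 2) := by
    rw [← pow_mul, ← pow_add]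
    congr 1
    omega
  have e4 : r ^ (N - 1) * r ^ 2 = r ^ (N + 1) := by
    rw [← pow_add]; congr 1; omega
  have e5 : (2:ℝ) * c = (N:ℝ) - 2 := by rw [hc]; ring
  unfold gm
  rw [mul_pow, mul_pow, mul_pow, mul_pow, mul_pow, mul_pow, e1, e2]
  rw [div_eq_mul_inv]
  have : (-c) ^ 2 = c ^ 2 := by ring
  rw [this]
  have e6 : (2*r) ^ 2 * c ^ 2 = r^2 * ((N:ℝ)-2)^2 := by
    rw [hc]; ring
  rw [← e3, ← e4]
  linear_combination (r ^ (N-1) * AN N ^ 2 * (n:ℝ)^(N-2) * ((n:ℝ)^2)^2 *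
    ((1 + (n:ℝ)^2*r^2)^N)⁻¹) * e6

lemma key2 {N n : ℕ} (hN : 3 ≤ N) (hn : 1 ≤ n) {p : ℝ}
    (hp : p = 2 * (N : ℝ) / ((N : ℝ) - 2)) {r : ℝ} (hr : r ∈ Ioo (0:ℝ) 1) :
    r ^ (N-1) * (Θ N n r) ^ p = AN N ^ p * (n:ℝ) ^ N * gm (n:ℝ) (N-1) N r := by
  have hn0 : (0:ℝ) < (n:ℝ) := by exact_mod_cast hn
  have hden : (0:ℝ) < 1 + (n:ℝ)^2 * r^2 := by positivity
  have hN2 : (0:ℝ) < (N:ℝ) - 2 := by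
    have h3 : (3:ℝ) ≤ (N:ℝ) := by exact_mod_cast hN
    linarith
  have hcp : (((N:ℝ)-2)/2) * p = (N:ℝ) := by
    rw [hp]; field_simp
  rw [Θ, if_pos hr.2, Real.mul_rpow (AN_pos hN).le (Real.rpow_nonneg (by positivity) _),
    ← Real.rpow_mul (by positivity : (0:ℝ) ≤ (n:ℝ) / (1 + (n:ℝ)^2*r^2)),
    hcp, Real.rpow_natCast, div_pow]
  unfold gm
  field_simp

lemma mid_theta {N n : ℕ} {r : ℝ} (hr : r ∈ Ioo (1:ℝ) 2) :
    Θ N n r = AN N * ((n : ℝ) / (1 + (n : ℝ) ^ 2)) ^ (((N : ℝ) - 2) / 2) * (2 - r) := by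
  rw [Θ, if_neg (not_lt.mpr hr.1.le), if_pos hr.2]

lemma key3 {N n : ℕ} {r : ℝ} (hr : r ∈ Ioo (1:ℝ) 2) :
    deriv (Θ N n) r = -(AN N * ((n : ℝ) / (1 + (n : ℝ) ^ 2)) ^ (((N : ℝ) - 2) / 2)) := by
  set K := AN N * ((n : ℝ) / (1 + (n : ℝ) ^ 2)) ^ (((N : ℝ) - 2) / 2) with hK
  have hev : Θ N n =ᶠ[nhds r] fun x => K * (2 - x) := by
    filter_upwards [isOpen_Ioo.mem_nhds hr] with x hx
    exact mid_theta hx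
  have hd : HasDerivAt (fun x : ℝ => K * (2 - x)) (K * (0 - 1)) r :=
    ((hasDerivAt_const r (2:ℝ)).sub (hasDerivAt_id r)).const_mul K
  rw [hev.deriv_eq, hd.deriv]
  ring

lemma key4 {N n : ℕ} {r : ℝ} (hr : r ∈ Ioi (2:ℝ)) :
    Θ N n r = 0 ∧ deriv (Θ N n) r = 0 := by
  have h2 : (2:ℝ) < r := hr
  constructor
  · rw [Θ, if_neg (by linarith), if_neg (by linarith)]
  · have hev : Θ N n =ᶠ[nhds r] fun _ => (0:ℝ) := by
      filter_upwards [isOpen_Ioi.mem_nhds hr] with x hx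
      have : (2:ℝ) < x := hx
      rw [Θ, if_neg (by linarith), if_neg (by linarith)]
    rw [hev.deriv_eq, deriv_const]

-- bound on the cutoff constant
lemma K2_sq_le {N n : ℕ} (hN : 3 ≤ N) (hn : 1 ≤ n) :
    (AN N * ((n : ℝ) / (1 + (n : ℝ) ^ 2)) ^ (((N : ℝ) - 2) / 2)) ^ 2
      ≤ AN N ^ 2 * ((n:ℝ) ^ (N-2))⁻¹ := by
  have hn0 : (0:ℝ) < (n:ℝ) := by exact_mod_cast hn
  have hq0 : (0:ℝ) < (n:ℝ) / (1 + (n:ℝ)^2) := by positivity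
  have hNc : ((N - 2 : ℕ) : ℝ) = (N:ℝ) - 2 := by
    have : (2:ℕ) ≤ N := by omega
    push_cast [this]; ring
  have e1 : (((n:ℝ) / (1 + (n:ℝ)^2)) ^ (((N:ℝ)-2)/2)) ^ 2
      = ((n:ℝ) / (1 + (n:ℝ)^2)) ^ (N - 2 : ℕ) := by
    rw [← Real.rpow_natCast (((n:ℝ) / (1 + (n:ℝ)^2)) ^ (((N:ℝ)-2)/2)) 2,
      ← Real.rpow_mul hq0.le, ← Real.rpow_natCast ((n:ℝ) / (1 + (n:ℝ)^2)) (N-2), hNc]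
    norm_num
  have hqle : (n:ℝ) / (1 + (n:ℝ)^2) ≤ (n:ℝ)⁻¹ := by
    rw [div_le_iff₀ (by positivity)]
    rw [inv_mul_eq_div, le_div_iff₀ hn0]
    nlinarith
  have e2 : ((n:ℝ) / (1 + (n:ℝ)^2)) ^ (N - 2 : ℕ) ≤ ((n:ℝ)⁻¹) ^ (N - 2 : ℕ) :=
    pow_le_pow_left₀ hq0.le hqle _
  rw [mul_pow, e1]
  calc AN N ^ 2 * ((n:ℝ) / (1 + (n:ℝ)^2)) ^ (N - 2 : ℕ)
      ≤ AN N ^ 2 * ((n:ℝ)⁻¹) ^ (N - 2 : ℕ) := by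
        apply mul_le_mul_of_nonneg_left e2 (sq_nonneg _)
    _ = AN N ^ 2 * ((n:ℝ) ^ (N-2))⁻¹ := by rw [inv_pow]

lemma int_decomp1 {N n : ℕ} (hN : 3 ≤ N) (hn : 1 ≤ n) :
    ∃ M : ℝ, 0 ≤ M ∧ M ≤ 2^(N-1) * (AN N ^ 2 * ((n:ℝ)^(N-2))⁻¹) ∧
    ∫ r in Ioi (0:ℝ), r^(N-1) * (deriv (Θ N n) r)^2
      = AN N ^ 2 * ((N:ℝ)-2)^2 * (n:ℝ)^(N+2) * (∫ r in Ioo (0:ℝ) 1, gm (n:ℝ) (N+1) N r)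
        + M := by
  set D : ℝ := AN N ^ 2 * ((N:ℝ)-2)^2 * (n:ℝ)^(N+2) with hD
  set K2 : ℝ := AN N * ((n : ℝ) / (1 + (n : ℝ) ^ 2)) ^ (((N : ℝ) - 2) / 2) with hK2
  set f : ℝ → ℝ := fun r => r^(N-1) * (deriv (Θ N n) r)^2 with hf
  have hmod1 : Continuous (fun r : ℝ => D * gm (n:ℝ) (N+1) N r) :=
    continuous_const.mul (gm_cont (n:ℝ) (N+1) N)
  have hmod2 : Continuous (fun r : ℝ => r^(N-1) * K2^2) :=
    (continuous_pow (N-1)).mul continuous_const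
  have heq1 : EqOn (fun r : ℝ => D * gm (n:ℝ) (N+1) N r) f (Ioo (0:ℝ) 1) := by
    intro r hr; exact (key1 hN hn hr).symm
  have heq2 : EqOn (fun r : ℝ => r^(N-1) * K2^2) f (Ioo (1:ℝ) 2) := by
    intro r hr
    simp only [hf]
    rw [key3 hr, neg_sq]
  have heq3 : EqOn (fun _ : ℝ => (0:ℝ)) f (Ioi (2:ℝ)) := by
    intro r hr
    simp only [hf]
    rw [(key4 hr).2]
    ring
  have hI1 : IntegrableOn f (Ioc (0:ℝ) 1) := by
    rw [integrableOn_Ioc_iff_integrableOn_Ioo]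
    exact (hmod1.integrableOn_Icc.mono_set Ioo_subset_Icc_self).congr_fun heq1 measurableSet_Ioo
  have hI2 : IntegrableOn f (Ioc (1:ℝ) 2) := by
    rw [integrableOn_Ioc_iff_integrableOn_Ioo]
    exact (hmod2.integrableOn_Icc.mono_set Ioo_subset_Icc_self).congr_fun heq2 measurableSet_Ioo
  have hI3 : IntegrableOn f (Ioi (2:ℝ)) :=
    (integrableOn_zero).congr_fun heq3 measurableSet_Ioi
  have hsplit : ∫ r in Ioi (0:ℝ), f r
      = (∫ r in Ioc (0:ℝ) 1, f r) + ((∫ r in Ioc (1:ℝ) 2, f r) + ∫ r in Ioi (2:ℝ), f r) := by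
    rw [← setIntegral_union (Set.Ioc_disjoint_Ioi le_rfl) measurableSet_Ioi hI2 hI3,
      Ioc_union_Ioi_eq_Ioi (by norm_num : (1:ℝ) ≤ 2),
      ← setIntegral_union (Set.Ioc_disjoint_Ioi le_rfl) measurableSet_Ioi hI1
        (hI2.union hI3 |>.mono_set (by rw [Ioc_union_Ioi_eq_Ioi (by norm_num : (1:ℝ) ≤ 2)])),
      Ioc_union_Ioi_eq_Ioi (zero_le_one' ℝ)]
  have hint3 : ∫ r in Ioi (2:ℝ), f r = 0 := by
    rw [← setIntegral_congr_fun measurableSet_Ioi heq3, integral_zero]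
  have hint1 : ∫ r in Ioc (0:ℝ) 1, f r
      = D * ∫ r in Ioo (0:ℝ) 1, gm (n:ℝ) (N+1) N r := by
    rw [MeasureTheory.integral_Ioc_eq_integral_Ioo,
      ← setIntegral_congr_fun measurableSet_Ioo heq1, MeasureTheory.integral_const_mul]
  refine ⟨∫ r in Ioc (1:ℝ) 2, f r, ?_, ?_, ?_⟩
  · rw [MeasureTheory.integral_Ioc_eq_integral_Ioo,
      ← setIntegral_congr_fun measurableSet_Ioo heq2]
    apply setIntegral_nonneg measurableSet_Ioo
    intro r hr
    have : (0:ℝ) < r := lt_trans one_pos hr.1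
    positivity
  · rw [MeasureTheory.integral_Ioc_eq_integral_Ioo,
      ← setIntegral_congr_fun measurableSet_Ioo heq2]
    calc ∫ r in Ioo (1:ℝ) 2, r^(N-1) * K2^2
        ≤ ∫ _ in Ioo (1:ℝ) 2, (2:ℝ)^(N-1) * K2^2 := by
          apply setIntegral_mono_on
            (hmod2.integrableOn_Icc.mono_set Ioo_subset_Icc_self)
            (integrableOn_const (by rw [Real.volume_Ioo]; norm_num))
            measurableSet_Ioo
          intro r hr
          have h1 : (0:ℝ) < r := lt_trans one_pos hr.1
          exact mul_le_mul_of_nonneg_right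
            (pow_le_pow_left₀ h1.le hr.2.le _) (sq_nonneg _)
      _ = (2:ℝ)^(N-1) * K2^2 := by
          rw [setIntegral_const, Real.volume_real_Ioo]
          norm_num
      _ ≤ 2^(N-1) * (AN N ^ 2 * ((n:ℝ)^(N-2))⁻¹) :=
          mul_le_mul_of_nonneg_left (K2_sq_le hN hn) (by positivity)
  · rw [hsplit, hint3, hint1, add_zero]

lemma K2_rpow_le {N n : ℕ} (hN : 3 ≤ N) (hn : 1 ≤ n) {p : ℝ}
    (hp : p = 2 * (N : ℝ) / ((N : ℝ) - 2)) :
    (AN N * ((n : ℝ) / (1 + (n : ℝ) ^ 2)) ^ (((N : ℝ) - 2) / 2)) ^ p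
      ≤ AN N ^ p * ((n:ℝ) ^ N)⁻¹ := by
  have hn0 : (0:ℝ) < (n:ℝ) := by exact_mod_cast hn
  have hq0 : (0:ℝ) < (n:ℝ) / (1 + (n:ℝ)^2) := by positivity
  have hN2 : (0:ℝ) < (N:ℝ) - 2 := by
    have h3 : (3:ℝ) ≤ (N:ℝ) := by exact_mod_cast hN
    linarith
  have hcp : (((N:ℝ)-2)/2) * p = (N:ℝ) := by rw [hp]; field_simp
  rw [Real.mul_rpow (AN_pos hN).le (Real.rpow_nonneg hq0.le _),
    ← Real.rpow_mul hq0.le, hcp, Real.rpow_natCast]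
  apply mul_le_mul_of_nonneg_left _ (Real.rpow_nonneg (AN_pos hN).le p)
  have hqle : (n:ℝ) / (1 + (n:ℝ)^2) ≤ (n:ℝ)⁻¹ := by
    rw [div_le_iff₀ (by positivity), inv_mul_eq_div, le_div_iff₀ hn0]
    nlinarith
  calc ((n:ℝ) / (1 + (n:ℝ)^2)) ^ N ≤ ((n:ℝ)⁻¹) ^ N := pow_le_pow_left₀ hq0.le hqle _
    _ = ((n:ℝ) ^ N)⁻¹ := by rw [inv_pow]

lemma int_decomp2 {N n : ℕ} (hN : 3 ≤ N) (hn : 1 ≤ n) {p : ℝ}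
    (hp : p = 2 * (N : ℝ) / ((N : ℝ) - 2)) :
    ∃ M : ℝ, 0 ≤ M ∧ M ≤ 2^(N-1) * (AN N ^ p * ((n:ℝ)^N)⁻¹) ∧
    ∫ r in Ioi (0:ℝ), r^(N-1) * (Θ N n r)^p
      = AN N ^ p * (n:ℝ)^N * (∫ r in Ioo (0:ℝ) 1, gm (n:ℝ) (N-1) N r) + M := by
  have hN2 : (0:ℝ) < (N:ℝ) - 2 := by
    have h3 : (3:ℝ) ≤ (N:ℝ) := by exact_mod_cast hN
    linarith
  have hN3 : (3:ℝ) ≤ (N:ℝ) := by exact_mod_cast hN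
  have hp0 : 0 < p := by
    rw [hp]; exact div_pos (by linarith) (by linarith)
  set E : ℝ := AN N ^ p * (n:ℝ)^N with hE
  set K2 : ℝ := AN N * ((n : ℝ) / (1 + (n : ℝ) ^ 2)) ^ (((N : ℝ) - 2) / 2) with hK2
  have hK2nn : 0 ≤ K2 := by
    rw [hK2]
    exact mul_nonneg (AN_pos hN).le (Real.rpow_nonneg (by positivity) _)
  set f : ℝ → ℝ := fun r => r^(N-1) * (Θ N n r)^p with hf
  have hmod1 : Continuous (fun r : ℝ => E * gm (n:ℝ) (N-1) N r) :=
    continuous_const.mul (gm_cont (n:ℝ) (N-1) N)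
  have hmod2 : Continuous (fun r : ℝ => r^(N-1) * (K2 * (2 - r)) ^ p) := by
    apply (continuous_pow (N-1)).mul
    apply Continuous.rpow_const (continuous_const.mul (continuous_const.sub continuous_id))
    exact fun x => Or.inr hp0.le
  have heq1 : EqOn (fun r : ℝ => E * gm (n:ℝ) (N-1) N r) f (Ioo (0:ℝ) 1) := by
    intro r hr; exact (key2 hN hn hp hr).symm
  have heq2 : EqOn (fun r : ℝ => r^(N-1) * (K2 * (2 - r)) ^ p) f (Ioo (1:ℝ) 2) := by
    intro r hr
    simp only [hf]
    rw [mid_theta hr]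
  have heq3 : EqOn (fun _ : ℝ => (0:ℝ)) f (Ioi (2:ℝ)) := by
    intro r hr
    simp only [hf]
    rw [(key4 hr).1, Real.zero_rpow hp0.ne', mul_zero]
  have hI1 : IntegrableOn f (Ioc (0:ℝ) 1) := by
    rw [integrableOn_Ioc_iff_integrableOn_Ioo]
    exact (hmod1.integrableOn_Icc.mono_set Ioo_subset_Icc_self).congr_fun heq1 measurableSet_Ioo
  have hI2 : IntegrableOn f (Ioc (1:ℝ) 2) := by
    rw [integrableOn_Ioc_iff_integrableOn_Ioo]
    exact (hmod2.integrableOn_Icc.mono_set Ioo_subset_Icc_self).congr_fun heq2 measurableSet_Ioo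
  have hI3 : IntegrableOn f (Ioi (2:ℝ)) :=
    (integrableOn_zero).congr_fun heq3 measurableSet_Ioi
  have hsplit : ∫ r in Ioi (0:ℝ), f r
      = (∫ r in Ioc (0:ℝ) 1, f r) + ((∫ r in Ioc (1:ℝ) 2, f r) + ∫ r in Ioi (2:ℝ), f r) := by
    rw [← setIntegral_union (Set.Ioc_disjoint_Ioi le_rfl) measurableSet_Ioi hI2 hI3,
      Ioc_union_Ioi_eq_Ioi (by norm_num : (1:ℝ) ≤ 2),
      ← setIntegral_union (Set.Ioc_disjoint_Ioi le_rfl) measurableSet_Ioi hI1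
        (hI2.union hI3 |>.mono_set (by rw [Ioc_union_Ioi_eq_Ioi (by norm_num : (1:ℝ) ≤ 2)])),
      Ioc_union_Ioi_eq_Ioi (zero_le_one' ℝ)]
  have hint3 : ∫ r in Ioi (2:ℝ), f r = 0 := by
    rw [← setIntegral_congr_fun measurableSet_Ioi heq3, integral_zero]
  have hint1 : ∫ r in Ioc (0:ℝ) 1, f r
      = E * ∫ r in Ioo (0:ℝ) 1, gm (n:ℝ) (N-1) N r := by
    rw [MeasureTheory.integral_Ioc_eq_integral_Ioo,
      ← setIntegral_congr_fun measurableSet_Ioo heq1, MeasureTheory.integral_const_mul]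
  refine ⟨∫ r in Ioc (1:ℝ) 2, f r, ?_, ?_, ?_⟩
  · rw [MeasureTheory.integral_Ioc_eq_integral_Ioo,
      ← setIntegral_congr_fun measurableSet_Ioo heq2]
    apply setIntegral_nonneg measurableSet_Ioo
    intro r hr
    have h0 : (0:ℝ) < r := lt_trans one_pos hr.1
    have : (0:ℝ) ≤ (K2 * (2 - r)) ^ p := Real.rpow_nonneg (by nlinarith [hr.2]) p
    positivity
  · rw [MeasureTheory.integral_Ioc_eq_integral_Ioo,
      ← setIntegral_congr_fun measurableSet_Ioo heq2]
    calc ∫ r in Ioo (1:ℝ) 2, r^(N-1) * (K2 * (2 - r)) ^ p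
        ≤ ∫ _ in Ioo (1:ℝ) 2, (2:ℝ)^(N-1) * K2 ^ p := by
          apply setIntegral_mono_on
            (hmod2.integrableOn_Icc.mono_set Ioo_subset_Icc_self)
            (integrableOn_const (by rw [Real.volume_Ioo]; norm_num))
            measurableSet_Ioo
          intro r hr
          have h1 : (0:ℝ) < r := lt_trans one_pos hr.1
          have h2r : (0:ℝ) ≤ 2 - r := by linarith [hr.2.le]
          have e : (K2 * (2 - r)) ^ p = K2 ^ p * (2 - r) ^ p := Real.mul_rpow hK2nn h2r
          have e2 : (2 - r) ^ p ≤ 1 :=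
            Real.rpow_le_one h2r (by linarith [hr.1.le]) hp0.le
          calc r^(N-1) * (K2 * (2 - r)) ^ p
              ≤ (2:ℝ)^(N-1) * (K2 * (2 - r)) ^ p := by
                apply mul_le_mul_of_nonneg_right (pow_le_pow_left₀ h1.le hr.2.le _)
                  (Real.rpow_nonneg (by nlinarith) p)
            _ ≤ (2:ℝ)^(N-1) * K2 ^ p := by
                rw [e]
                apply mul_le_mul_of_nonneg_left _ (by positivity)
                calc K2 ^ p * (2 - r) ^ p ≤ K2 ^ p * 1 :=
                      mul_le_mul_of_nonneg_left e2 (Real.rpow_nonneg hK2nn p)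
                  _ = K2 ^ p := mul_one _
      _ = (2:ℝ)^(N-1) * K2 ^ p := by
          rw [setIntegral_const, Real.volume_real_Ioo]
          norm_num
      _ ≤ 2^(N-1) * (AN N ^ p * ((n:ℝ)^N)⁻¹) :=
          mul_le_mul_of_nonneg_left (K2_rpow_le hN hn hp) (by positivity)
  · rw [hsplit, hint3, hint1, add_zero]

/-- Gradient and critical-norm asymptotics of the truncated bubble, in radial form:
`‖∇U_n‖₂² = ω_N ∫₀^∞ r^{N-1} Θ_n'(r)² dr = S^{N/2} + O(n^{-(N-2)})` and
`‖U_n‖_{2^*}^{2^*} = ω_N ∫₀^∞ r^{N-1} Θ_n(r)^{2^*} dr = S^{N/2} + O(n^{-N})`, using the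
Aubin–Talenti identities expressing `S^{N/2}` through the full-space radial integrals. -/
theorem stmt17 (N : ℕ) (hN : 3 ≤ N) (p : ℝ) (hp : p = 2 * (N : ℝ) / ((N : ℝ) - 2))
    (ω S : ℝ) (hω : 0 < ω) (hS : 0 < S)
    (hid1 : ω * (AN N) ^ 2 * ((N : ℝ) - 2) ^ 2 *
      (∫ s in Set.Ioi (0 : ℝ), s ^ (N + 1) / (1 + s ^ 2) ^ N) = S ^ ((N : ℝ) / 2))
    (hid2 : ω * (AN N) ^ p *
      (∫ s in Set.Ioi (0 : ℝ), s ^ (N - 1) / (1 + s ^ 2) ^ N) = S ^ ((N : ℝ) / 2)) :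
    ((fun n : ℕ => ω * (∫ r in Set.Ioi (0 : ℝ), r ^ (N - 1) * (deriv (Θ N n) r) ^ 2)
        - S ^ ((N : ℝ) / 2)) =O[atTop] fun n : ℕ => (n : ℝ) ^ (-((N : ℝ) - 2))) ∧
    ((fun n : ℕ => ω * (∫ r in Set.Ioi (0 : ℝ), r ^ (N - 1) * (Θ N n r) ^ p)
        - S ^ ((N : ℝ) / 2)) =O[atTop] fun n : ℕ => (n : ℝ) ^ (-(N : ℝ))) := by
  have hN3 : (3:ℝ) ≤ (N:ℝ) := by exact_mod_cast hN
  have hN2 : (0:ℝ) < (N:ℝ) - 2 := by linarith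
  have hNc : ((N - 2 : ℕ) : ℝ) = (N:ℝ) - 2 := by
    have : (2:ℕ) ≤ N := by omega
    push_cast [this]; ring
  have hk1 : (((N+1 : ℕ)):ℝ) - 2*(N:ℝ) < -1 := by push_cast; linarith
  have hk2 : (((N-1 : ℕ)):ℝ) - 2*(N:ℝ) < -1 := by
    have h1 : (1:ℕ) ≤ N := by omega
    push_cast [h1]; linarith
  have hF1 : (∫ s in Ioi (0:ℝ), gm 1 (N+1) N s)
      = ∫ s in Set.Ioi (0 : ℝ), s ^ (N + 1) / (1 + s ^ 2) ^ N := by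
    unfold gm; norm_num
  have hF2 : (∫ s in Ioi (0:ℝ), gm 1 (N-1) N s)
      = ∫ s in Set.Ioi (0 : ℝ), s ^ (N - 1) / (1 + s ^ 2) ^ N := by
    unfold gm; norm_num
  constructor
  · -- part 1
    set Crp : ℝ := ∫ r in Ioi (1:ℝ), r ^ ((((N+1):ℕ):ℝ) - 2*(N:ℝ)) with hCrp
    have hCrp0 : 0 ≤ Crp := gm_rpow_tail_nonneg (N+1) N
    rw [isBigO_iff]
    refine ⟨ω * (2^(N-1) * AN N ^ 2 + AN N ^ 2 * ((N:ℝ)-2)^2 * Crp), ?_⟩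
    filter_upwards [eventually_ge_atTop 1] with n hn
    have hn1 : (1:ℝ) ≤ (n:ℝ) := by exact_mod_cast hn
    have hn0 : (0:ℝ) < (n:ℝ) := lt_of_lt_of_le one_pos hn1
    obtain ⟨M, hM0, hMle, hint⟩ := int_decomp1 hN hn
    set T : ℝ := ∫ r in Ioi (1:ℝ), gm (n:ℝ) (N+1) N r with hT
    have hT0 : 0 ≤ T := gm_tail_nonneg (n:ℝ) (N+1) N
    have hTle : T ≤ ((n:ℝ) ^ (2*N))⁻¹ * Crp := gm_tail_le hn1 hk1
    have hsub := gm_split hn1 hk1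
    rw [hsub, ← hT, hF1] at hint
    -- power identities
    have hne : ∀ m : ℕ, ((n:ℝ)^m) ≠ 0 := fun m => pow_ne_zero m hn0.ne'
    have hpow1 : (n:ℝ)^(N+2) * ((n:ℝ)^(N+1+1))⁻¹ = 1 := by
      rw [show N+1+1 = N+2 from rfl, mul_inv_cancel₀ (hne _)]
    have hpow2 : (n:ℝ)^(N+2) * ((n:ℝ)^(2*N))⁻¹ = ((n:ℝ)^(N-2))⁻¹ := by
      field_simp
      rw [← pow_add]
      congr 1
      omega
    -- main computation
    have hdiff : ω * (∫ r in Set.Ioi (0 : ℝ), r ^ (N - 1) * (deriv (Θ N n) r) ^ 2)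
        - S ^ ((N : ℝ) / 2)
        = ω * (M - AN N ^ 2 * ((N:ℝ)-2)^2 * ((n:ℝ)^(N+2) * T)) := by
      rw [hint, ← hid1]
      have : AN N ^ 2 * ((N:ℝ)-2)^2 * (n:ℝ)^(N+2) *
          (((n:ℝ) ^ (N+1+1))⁻¹ * (∫ s in Set.Ioi (0 : ℝ), s ^ (N + 1) / (1 + s ^ 2) ^ N) - T)
          = AN N ^ 2 * ((N:ℝ)-2)^2 * (∫ s in Set.Ioi (0 : ℝ), s ^ (N + 1) / (1 + s ^ 2) ^ N)
            - AN N ^ 2 * ((N:ℝ)-2)^2 * ((n:ℝ)^(N+2) * T) := by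
        have h := hpow1
        field_simp
      rw [this]
      ring
    rw [hdiff]
    -- norm computations
    have hnorm : ‖(n:ℝ) ^ (-((N:ℝ)-2))‖ = ((n:ℝ)^(N-2))⁻¹ := by
      rw [Real.norm_eq_abs, abs_of_nonneg (Real.rpow_nonneg hn0.le _), Real.rpow_neg hn0.le,
        ← Real.rpow_natCast (n:ℝ) (N-2), hNc]
    rw [hnorm, Real.norm_eq_abs]
    have hXle : AN N ^ 2 * ((N:ℝ)-2)^2 * ((n:ℝ)^(N+2) * T)
        ≤ AN N ^ 2 * ((N:ℝ)-2)^2 * Crp * ((n:ℝ)^(N-2))⁻¹ := by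
      have h1 : (n:ℝ)^(N+2) * T ≤ (n:ℝ)^(N+2) * (((n:ℝ) ^ (2*N))⁻¹ * Crp) :=
        mul_le_mul_of_nonneg_left hTle (by positivity)
      have h2 : (n:ℝ)^(N+2) * (((n:ℝ) ^ (2*N))⁻¹ * Crp) = Crp * ((n:ℝ)^(N-2))⁻¹ := by
        rw [← mul_assoc, hpow2]; ring
      have h3 := h1.trans_eq h2
      calc AN N ^ 2 * ((N:ℝ)-2)^2 * ((n:ℝ)^(N+2) * T)
          ≤ AN N ^ 2 * ((N:ℝ)-2)^2 * (Crp * ((n:ℝ)^(N-2))⁻¹) := by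
            apply mul_le_mul_of_nonneg_left h3 (by positivity)
        _ = AN N ^ 2 * ((N:ℝ)-2)^2 * Crp * ((n:ℝ)^(N-2))⁻¹ := by ring
    have hX0 : 0 ≤ AN N ^ 2 * ((N:ℝ)-2)^2 * ((n:ℝ)^(N+2) * T) := by positivity
    rw [abs_mul, abs_of_nonneg hω.le]
    have habs : |M - AN N ^ 2 * ((N:ℝ)-2)^2 * ((n:ℝ)^(N+2) * T)|
        ≤ 2^(N-1) * (AN N ^ 2 * ((n:ℝ)^(N-2))⁻¹)
          + AN N ^ 2 * ((N:ℝ)-2)^2 * Crp * ((n:ℝ)^(N-2))⁻¹ := by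
      rw [abs_le]
      constructor <;> linarith [hMle, hXle, hM0, hX0]
    calc ω * |M - AN N ^ 2 * ((N:ℝ)-2)^2 * ((n:ℝ)^(N+2) * T)|
        ≤ ω * (2^(N-1) * (AN N ^ 2 * ((n:ℝ)^(N-2))⁻¹)
            + AN N ^ 2 * ((N:ℝ)-2)^2 * Crp * ((n:ℝ)^(N-2))⁻¹) :=
          mul_le_mul_of_nonneg_left habs hω.le
      _ = ω * (2^(N-1) * AN N ^ 2 + AN N ^ 2 * ((N:ℝ)-2)^2 * Crp) * ((n:ℝ)^(N-2))⁻¹ := by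
          ring
  · -- part 2
    set Crp : ℝ := ∫ r in Ioi (1:ℝ), r ^ ((((N-1):ℕ):ℝ) - 2*(N:ℝ)) with hCrp
    have hCrp0 : 0 ≤ Crp := gm_rpow_tail_nonneg (N-1) N
    rw [isBigO_iff]
    refine ⟨ω * (2^(N-1) * AN N ^ p + AN N ^ p * Crp), ?_⟩
    filter_upwards [eventually_ge_atTop 1] with n hn
    have hn1 : (1:ℝ) ≤ (n:ℝ) := by exact_mod_cast hn
    have hn0 : (0:ℝ) < (n:ℝ) := lt_of_lt_of_le one_pos hn1
    obtain ⟨M, hM0, hMle, hint⟩ := int_decomp2 hN hn hp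
    set T : ℝ := ∫ r in Ioi (1:ℝ), gm (n:ℝ) (N-1) N r with hT
    have hT0 : 0 ≤ T := gm_tail_nonneg (n:ℝ) (N-1) N
    have hTle : T ≤ ((n:ℝ) ^ (2*N))⁻¹ * Crp := gm_tail_le hn1 hk2
    have hsub := gm_split hn1 hk2
    rw [hsub, ← hT, hF2] at hint
    have hne : ∀ m : ℕ, ((n:ℝ)^m) ≠ 0 := fun m => pow_ne_zero m hn0.ne'
    have hN11 : N - 1 + 1 = N := by omega
    have hpow1 : (n:ℝ)^N * ((n:ℝ)^(N-1+1))⁻¹ = 1 := by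
      rw [hN11, mul_inv_cancel₀ (hne _)]
    have hpow2 : (n:ℝ)^N * ((n:ℝ)^(2*N))⁻¹ = ((n:ℝ)^N)⁻¹ := by
      field_simp
      rw [← pow_mul]
      congr 1
      omega
    have hANp : (0:ℝ) ≤ AN N ^ p := Real.rpow_nonneg (AN_pos hN).le p
    have hdiff : ω * (∫ r in Set.Ioi (0 : ℝ), r ^ (N - 1) * (Θ N n r) ^ p)
        - S ^ ((N : ℝ) / 2)
        = ω * (M - AN N ^ p * ((n:ℝ)^N * T)) := by
      rw [hint, ← hid2]
      have : AN N ^ p * (n:ℝ)^N *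
          (((n:ℝ) ^ (N-1+1))⁻¹ * (∫ s in Set.Ioi (0 : ℝ), s ^ (N - 1) / (1 + s ^ 2) ^ N) - T)
          = AN N ^ p * (∫ s in Set.Ioi (0 : ℝ), s ^ (N - 1) / (1 + s ^ 2) ^ N)
            - AN N ^ p * ((n:ℝ)^N * T) := by
        rw [hN11]
        field_simp
      rw [this]
      ring
    rw [hdiff]
    have hnorm : ‖(n:ℝ) ^ (-(N:ℝ))‖ = ((n:ℝ)^N)⁻¹ := by
      rw [Real.norm_eq_abs, abs_of_nonneg (Real.rpow_nonneg hn0.le _), Real.rpow_neg hn0.le,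
        Real.rpow_natCast]
    rw [hnorm, Real.norm_eq_abs]
    have hXle : AN N ^ p * ((n:ℝ)^N * T) ≤ AN N ^ p * Crp * ((n:ℝ)^N)⁻¹ := by
      have h1 : (n:ℝ)^N * T ≤ (n:ℝ)^N * (((n:ℝ) ^ (2*N))⁻¹ * Crp) :=
        mul_le_mul_of_nonneg_left hTle (by positivity)
      have h2 : (n:ℝ)^N * (((n:ℝ) ^ (2*N))⁻¹ * Crp) = Crp * ((n:ℝ)^N)⁻¹ := by
        rw [← mul_assoc, hpow2]; ring
      have h3 := h1.trans_eq h2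
      calc AN N ^ p * ((n:ℝ)^N * T)
          ≤ AN N ^ p * (Crp * ((n:ℝ)^N)⁻¹) := mul_le_mul_of_nonneg_left h3 hANp
        _ = AN N ^ p * Crp * ((n:ℝ)^N)⁻¹ := by ring
    have hX0 : 0 ≤ AN N ^ p * ((n:ℝ)^N * T) := by
      apply mul_nonneg hANp (by positivity)
    rw [abs_mul, abs_of_nonneg hω.le]
    have habs : |M - AN N ^ p * ((n:ℝ)^N * T)|
        ≤ 2^(N-1) * (AN N ^ p * ((n:ℝ)^N)⁻¹) + AN N ^ p * Crp * ((n:ℝ)^N)⁻¹ := by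
      rw [abs_le]
      constructor <;> linarith [hMle, hXle, hM0, hX0]
    calc ω * |M - AN N ^ p * ((n:ℝ)^N * T)|
        ≤ ω * (2^(N-1) * (AN N ^ p * ((n:ℝ)^N)⁻¹) + AN N ^ p * Crp * ((n:ℝ)^N)⁻¹) :=
          mul_le_mul_of_nonneg_left habs hω.le
      _ = ω * (2^(N-1) * AN N ^ p + AN N ^ p * Crp) * ((n:ℝ)^N)⁻¹ := by ring
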